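/- Let n ≥ 3 and let S_n be the star graph with vertex set {0,1,...,n−1} and edges {0,i} for 1 ≤ i ≤ n−1. Then the monoid of partial strong endomorphisms of S_n has cardinality |PsEnd(S_n)| = 2·n^{n−1} + n·2^{n−1} − 1. -/

import Mathlib

variable {V : Type*}

/-- Partial transformations of `V`. -/
abbrev PTrans (V : Type*) := V → Option V

/-- Monoid of partial transformations under (left-to-right) composition. -/
instance : Monoid (PTrans V) where
  mul f g := fun v => (f v).bind g
  one := fun v => some v
  mul_assoc f g h := by
    funext v
    show ((f v).bind g).bind h = (f v).bind (fun x => (g x).bind h)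
    cases f v <;> simp
  one_mul f := by funext v; rfl
  mul_one f := by
    funext v
    show (f v).bind (fun x => some x) = f v
    cases f v <;> simp

/-- Domain of a partial transformation. -/
def pdom (α : PTrans V) : Set V := {u | α u ≠ none}

/-- Image of a partial transformation. -/
def pim (α : PTrans V) : Set V := {v | ∃ u, α u = some v}

def IsPEnd (G : SimpleGraph V) (α : PTrans V) : Prop :=
  ∀ u v u' v', α u = some u' → α v = some v' → G.Adj u v → G.Adj u' v'

def IsPwEnd (G : SimpleGraph V) (α : PTrans V) : Prop :=
  ∀ u v u' v', α u = some u' → α v = some v' → G.Adj u v → u' ≠ v' → G.Adj u' v'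

def IsPsEnd (G : SimpleGraph V) (α : PTrans V) : Prop :=
  ∀ u v u' v', α u = some u' → α v = some v' → (G.Adj u v ↔ G.Adj u' v')

def IsPswEnd (G : SimpleGraph V) (α : PTrans V) : Prop :=
  ∀ u v u' v', α u = some u' → α v = some v' → ((G.Adj u v ∧ u' ≠ v') ↔ G.Adj u' v')

/-- Injectivity of a partial transformation. -/
def PInjective (α : PTrans V) : Prop :=
  ∀ u v w, α u = some w → α v = some w → u = v

open Classical in
/-- The inverse of a partial (injective) transformation. -/
noncomputable def pinv (α : PTrans V) : PTrans V :=
  fun v => if h : ∃ u, α u = some v then some h.choose else none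

/-- Partial automorphism: injective, and both it and its inverse are
partial endomorphisms. -/
def IsPAut (G : SimpleGraph V) (α : PTrans V) : Prop :=
  PInjective α ∧ IsPEnd G α ∧ IsPEnd G (pinv α)

/-- The star graph on vertices `{0,1,...,n-1}` with center `0`. -/
def starGraph (n : ℕ) : SimpleGraph (Fin n) :=
  SimpleGraph.fromRel (fun u _ => (u : ℕ) = 0)

namespace Stmt4Aux

variable {m : ℕ}

lemma star_adj (u v : Fin (m+1)) :
    (starGraph (m+1)).Adj u v ↔ u ≠ v ∧ (u = 0 ∨ v = 0) := by
  simp [starGraph, SimpleGraph.fromRel_adj, Fin.ext_iff, -Fin.val_eq_zero_iff]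

def mk1 (f : Fin m → Option (Fin m)) : PTrans (Fin (m+1)) :=
  Fin.cases (some 0) (fun i => (f i).map Fin.succ)

def mk2 (f : Fin m → Option (Fin m)) : PTrans (Fin (m+1)) :=
  Fin.cases none (fun i => (f i).map Fin.succ)

def mk3 (c : Fin m) (g : Fin m → Bool) : PTrans (Fin (m+1)) :=
  Fin.cases (some c.succ) (fun i => if g i then some 0 else none)

def mk4 (g : Fin m → Bool) : PTrans (Fin (m+1)) :=
  Fin.cases none (fun i => if g i then some 0 else none)

lemma isPsEnd_mk1 (f : Fin m → Option (Fin m)) : IsPsEnd (starGraph (m+1)) (mk1 f) := by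
  intro u v u' v' hu hv
  rw [star_adj, star_adj]
  induction u using Fin.cases <;> induction v using Fin.cases <;>
    simp [mk1, Option.map_eq_some_iff] at hu hv <;>
    try (obtain ⟨a, ha, rfl⟩ := hu)
  all_goals try (obtain ⟨b, hb, rfl⟩ := hv)
  all_goals try subst hu
  all_goals try subst hv
  all_goals simp [Fin.succ_ne_zero, (Fin.succ_ne_zero _).symm]


lemma isPsEnd_mk2 (f : Fin m → Option (Fin m)) : IsPsEnd (starGraph (m+1)) (mk2 f) := by
  intro u v u' v' hu hv
  rw [star_adj, star_adj]
  induction u using Fin.cases <;> induction v using Fin.cases <;>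
    simp [mk2, Option.map_eq_some_iff] at hu hv <;>
    try (obtain ⟨a, ha, rfl⟩ := hu)
  all_goals try (obtain ⟨b, hb, rfl⟩ := hv)
  all_goals simp [Fin.succ_ne_zero, (Fin.succ_ne_zero _).symm]

lemma isPsEnd_mk3 (c : Fin m) (g : Fin m → Bool) : IsPsEnd (starGraph (m+1)) (mk3 c g) := by
  intro u v u' v' hu hv
  rw [star_adj, star_adj]
  induction u using Fin.cases <;> induction v using Fin.cases <;>
    simp [mk3] at hu hv
  all_goals try (obtain ⟨-, rfl⟩ := hu)
  all_goals try (obtain ⟨-, rfl⟩ := hv)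
  all_goals try subst hu
  all_goals try subst hv
  all_goals simp [Fin.succ_ne_zero, (Fin.succ_ne_zero _).symm]

lemma isPsEnd_mk4 (g : Fin m → Bool) : IsPsEnd (starGraph (m+1)) (mk4 g) := by
  intro u v u' v' hu hv
  rw [star_adj, star_adj]
  induction u using Fin.cases <;> induction v using Fin.cases <;>
    simp [mk4] at hu hv
  all_goals try (obtain ⟨-, rfl⟩ := hu)
  all_goals try (obtain ⟨-, rfl⟩ := hv)
  all_goals simp [Fin.succ_ne_zero, (Fin.succ_ne_zero _).symm]


abbrev T (m : ℕ) :=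
  (Fin m → Option (Fin m)) ⊕ (Fin m → Option (Fin m)) ⊕ (Fin m × (Fin m → Bool)) ⊕
    {g : Fin m → Bool // ∃ i, g i = true}

def F : T m → {α : PTrans (Fin (m+1)) // IsPsEnd (starGraph (m+1)) α}
  | .inl f => ⟨mk1 f, isPsEnd_mk1 f⟩
  | .inr (.inl f) => ⟨mk2 f, isPsEnd_mk2 f⟩
  | .inr (.inr (.inl (c, g))) => ⟨mk3 c g, isPsEnd_mk3 c g⟩
  | .inr (.inr (.inr g)) => ⟨mk4 g.1, isPsEnd_mk4 g.1⟩

@[simp] lemma mk1_zero (f : Fin m → Option (Fin m)) : mk1 f 0 = some 0 := rfl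
@[simp] lemma mk1_succ (f : Fin m → Option (Fin m)) (i : Fin m) :
    mk1 f i.succ = (f i).map Fin.succ := by simp [mk1]
@[simp] lemma mk2_zero (f : Fin m → Option (Fin m)) : mk2 f 0 = none := rfl
@[simp] lemma mk2_succ (f : Fin m → Option (Fin m)) (i : Fin m) :
    mk2 f i.succ = (f i).map Fin.succ := by simp [mk2]
@[simp] lemma mk3_zero (c : Fin m) (g : Fin m → Bool) : mk3 c g 0 = some c.succ := rfl
@[simp] lemma mk3_succ (c : Fin m) (g : Fin m → Bool) (i : Fin m) :
    mk3 c g i.succ = if g i then some 0 else none := by simp [mk3]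
@[simp] lemma mk4_zero (g : Fin m → Bool) : mk4 g 0 = none := rfl
@[simp] lemma mk4_succ (g : Fin m → Bool) (i : Fin m) :
    mk4 g i.succ = if g i then some 0 else none := by simp [mk4]

lemma map_succ_inj : Function.Injective (Option.map (Fin.succ (n := m))) :=
  Option.map_injective (Fin.succ_injective m)

lemma F_inj : Function.Injective (F (m := m)) := by
  rintro (f | f | ⟨c, g⟩ | ⟨g, hg⟩) (f' | f' | ⟨c', g'⟩ | ⟨g', hg'⟩) h <;>
    simp only [F, Subtype.mk.injEq] at h
  · exact congrArg _ (funext fun i => map_succ_inj (by simpa using congrFun h i.succ))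
  · exact absurd (congrFun h 0) (by simp)
  · exact absurd (congrFun h 0) (by simp [Fin.succ_ne_zero, (Fin.succ_ne_zero c').symm, Fin.ext_iff])
  · exact absurd (congrFun h 0) (by simp)
  · exact absurd (congrFun h 0) (by simp)
  · have hf : f = f' := funext fun i => map_succ_inj (by simpa using congrFun h i.succ)
    rw [hf]
  · exact absurd (congrFun h 0) (by simp)
  · obtain ⟨i, hi⟩ := hg'
    have := congrFun h i.succ
    simp [hi] at this
  · exact absurd (congrFun h 0) (by simp [Fin.succ_ne_zero, (Fin.succ_ne_zero c).symm, Fin.ext_iff])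
  · exact absurd (congrFun h 0) (by simp)
  · have hc : c = c' := Fin.succ_injective _ (by simpa using congrFun h 0)
    subst hc
    have hgg : g = g' := by
      funext i
      have := congrFun h i.succ
      cases hgi : g i <;> cases hgi' : g' i <;> simp_all
    rw [hgg]
  · exact absurd (congrFun h 0) (by simp)
  · exact absurd (congrFun h 0) (by simp)
  · obtain ⟨i, hi⟩ := hg
    have := congrFun h i.succ
    simp [hi] at this
  · exact absurd (congrFun h 0) (by simp)
  · have hgg : g = g' := by
      funext i
      have := congrFun h i.succ
      cases hgi : g i <;> cases hgi' : g' i <;> simp_all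
    subst hgg
    rfl


lemma F_surj : Function.Surjective (F (m := m)) := by
  rintro ⟨α, h⟩
  rcases e : α 0 with - | c
  · -- α 0 = none
    by_cases hz : ∃ i : Fin m, α i.succ = some 0
    · -- all defined leaf values are 0
      obtain ⟨i0, hi0⟩ := hz
      have key : ∀ (i : Fin m) (w : Fin (m+1)), α i.succ = some w → w = 0 := by
        intro i w hw
        by_cases hii : i = i0
        · subst hii; rw [hw] at hi0; exact Option.some_injective _ hi0
        · have h2 := h i.succ i0.succ w 0 hw hi0
          rw [star_adj, star_adj] at h2
          by_contra hw0
          have h3 := h2.mpr ⟨hw0, Or.inr rfl⟩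
          rcases h3.2 with h4 | h4 <;> exact Fin.succ_ne_zero _ h4
      refine ⟨.inr (.inr (.inr ⟨fun i => (α i.succ).isSome, ⟨i0, by simp [hi0]⟩⟩)), ?_⟩
      refine Subtype.ext (funext fun u => ?_)
      induction u using Fin.cases with
      | zero => simpa [F] using e.symm
      | succ i =>
        simp only [F, mk4_succ]
        rcases hw : α i.succ with - | w
        · simp [hw]
        · have h0 := key i w hw
          subst h0
          simp [hw]
    · push_neg at hz
      have key : ∀ (i : Fin m) (w : Fin (m+1)), α i.succ = some w → w ≠ 0 := by
        intro i w hw hw0; exact hz i (hw0 ▸ hw)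
      refine ⟨.inr (.inl fun i : Fin m => (α i.succ).map
        (fun w => ⟨w.val - 1, by have := i.pos; have := w.isLt; omega⟩)), ?_⟩
      refine Subtype.ext (funext fun u => ?_)
      induction u using Fin.cases with
      | zero => simpa [F] using e.symm
      | succ i =>
        simp only [F, mk2_succ]
        rcases hw : α i.succ with - | w
        · simp
        · have hw0 := key i w hw
          simp only [Option.map_map, Option.map_eq_some_iff]
          refine ⟨w, rfl, ?_⟩
          have h1 : w.val ≠ 0 := fun hh => hw0 (Fin.ext hh)
          simp only [Function.comp_apply, Fin.ext_iff, Fin.val_succ]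
          omega
  · rcases Fin.eq_zero_or_eq_succ c with rfl | ⟨d, rfl⟩
    ·
      have key : ∀ (i : Fin m) (w : Fin (m+1)), α i.succ = some w → w ≠ 0 := by
        intro i w hw hw0
        have := h 0 i.succ 0 w e hw
        rw [star_adj, star_adj] at this
        have h2 := this.mp ⟨(Fin.succ_ne_zero i).symm, Or.inl rfl⟩
        exact h2.1 hw0.symm
      refine ⟨.inl (fun i : Fin m => (α i.succ).map
        (fun w => ⟨w.val - 1, by have := i.pos; have := w.isLt; omega⟩)), ?_⟩
      refine Subtype.ext (funext fun u => ?_)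
      induction u using Fin.cases with
      | zero => simpa [F] using e.symm
      | succ i =>
        simp only [F, mk1_succ]
        rcases hw : α i.succ with - | w
        · simp
        · have hw0 := key i w hw
          simp only [Option.map_map, Option.map_eq_some_iff]
          refine ⟨w, rfl, ?_⟩
          have h1 : w.val ≠ 0 := fun hh => hw0 (Fin.ext hh)
          simp only [Function.comp_apply, Fin.ext_iff, Fin.val_succ]
          omega
    · have key : ∀ (i : Fin m) (w : Fin (m+1)), α i.succ = some w → w = 0 := by
        intro i w hw
        have := h 0 i.succ d.succ w e hw
        rw [star_adj, star_adj] at this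
        have h2 := this.mp ⟨(Fin.succ_ne_zero i).symm, Or.inl rfl⟩
        rcases h2.2 with h3 | h3
        · exact absurd h3 (Fin.succ_ne_zero d)
        · exact h3
      refine ⟨.inr (.inr (.inl ⟨d, fun i => (α i.succ).isSome⟩)), ?_⟩
      refine Subtype.ext (funext fun u => ?_)
      induction u using Fin.cases with
      | zero => simpa [F] using e.symm
      | succ i =>
        simp only [F, mk3_succ]
        rcases hw : α i.succ with - | w
        · simp [hw]
        · have h0 := key i w hw
          subst h0
          simp [hw]


lemma cardS : Fintype.card {g : Fin m → Bool // ∃ i, g i = true} = 2 ^ m - 1 := by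
  have h1 : Fintype.card {g : Fin m → Bool // ¬ ∃ i, g i = true} = 1 := by
    rw [Fintype.card_eq_one_iff]
    refine ⟨⟨fun _ => false, by simp⟩, ?_⟩
    rintro ⟨g, hg⟩
    refine Subtype.ext (funext fun i => ?_)
    push_neg at hg
    simpa using hg i
  have h2 : Fintype.card {g : Fin m → Bool // ¬ ∃ i, g i = true}
      = Fintype.card (Fin m → Bool)
        - Fintype.card {g : Fin m → Bool // ∃ i, g i = true} :=
    Fintype.card_subtype_compl _
  have h3 : Fintype.card {g : Fin m → Bool // ∃ i, g i = true} ≤ Fintype.card (Fin m → Bool) :=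
    Fintype.card_subtype_le _
  have h4 : Fintype.card (Fin m → Bool) = 2 ^ m := by simp
  calc Fintype.card {g : Fin m → Bool // ∃ i, g i = true}
      = Fintype.card (Fin m → Bool) - (Fintype.card (Fin m → Bool)
          - Fintype.card {g : Fin m → Bool // ∃ i, g i = true}) :=
        (Nat.sub_sub_self h3).symm
    _ = Fintype.card (Fin m → Bool)
          - Fintype.card {g : Fin m → Bool // ¬ ∃ i, g i = true} := by rw [h2]
    _ = 2 ^ m - 1 := by rw [h4, h1]

lemma cardT : Nat.card (T m) = 2 * (m+1) ^ m + (m+1) * 2 ^ m - 1 := by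
  classical
  rw [Nat.card_eq_fintype_card]
  rw [Fintype.card_sum, Fintype.card_sum, Fintype.card_sum, Fintype.card_prod, cardS]
  simp only [Fintype.card_fun, Fintype.card_option, Fintype.card_fin, Fintype.card_bool]
  have h1 : 1 ≤ 2 ^ m := Nat.one_le_two_pow
  have key : m * 2 ^ m + (2 ^ m - 1) = (m + 1) * 2 ^ m - 1 := by
    rw [Nat.add_mul, Nat.one_mul]; omega
  have h2 : 1 ≤ (m + 1) * 2 ^ m := Nat.one_le_iff_ne_zero.mpr (by positivity)
  set a := (m+1) ^ m
  set c := (m + 1) * 2 ^ m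
  omega

lemma main (m : ℕ) :
    Nat.card {α : PTrans (Fin (m+1)) // IsPsEnd (starGraph (m+1)) α} =
      2 * (m+1) ^ m + (m+1) * 2 ^ m - 1 := by
  rw [← Nat.card_eq_of_bijective F ⟨F_inj, F_surj⟩, cardT]

end Stmt4Aux


theorem stmt4 (n : ℕ) (hn : 3 ≤ n) :
    Nat.card {α : PTrans (Fin n) // IsPsEnd (starGraph n) α} =
      2 * n ^ (n - 1) + n * 2 ^ (n - 1) - 1 := by
  obtain ⟨m, rfl⟩ : ∃ m, n = m + 1 := ⟨n - 1, by omega⟩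
  simpa using Stmt4Aux.main m
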